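/- Let p be a prime and ℤ_p the ring of p-adic integers. A function f : ℤ_p → ℤ_p is congruence preserving on ⟨ℤ_p;+,×⟩ if and only if for every ⟨ℤ_p;+,×⟩-recognizable subset L ⊆ ℤ_p, the lattice 𝓛(L) is closed under f⁻¹ (i.e., f⁻¹(M) ∈ 𝓛(L) for every M ∈ 𝓛(L)). -/

import Mathlib

/-- `r` is a ring congruence on ℤ_p. -/
def IsRingCongPadic {p : ℕ} [Fact p.Prime] (r : ℤ_[p] → ℤ_[p] → Prop) : Prop :=
  Equivalence r ∧ (∀ x y x' y', r x y → r x' y' → r (x + x') (y + y')) ∧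
    (∀ x y x' y', r x y → r x' y' → r (x * x') (y * y'))

/-- `f` is congruence preserving on ⟨ℤ_p;+,×⟩. -/
def CongPresPadic {p : ℕ} [Fact p.Prime] (f : ℤ_[p] → ℤ_[p]) : Prop :=
  ∀ r : ℤ_[p] → ℤ_[p] → Prop, IsRingCongPadic r → ∀ x y, r x y → r (f x) (f y)

/-- `L ⊆ ℤ_p` is ⟨ℤ_p;+,×⟩-recognizable. -/
def RecognizablePadic {p : ℕ} [Fact p.Prime] (L : Set ℤ_[p]) : Prop :=
  ∃ (M : Type) (_ : Ring M) (_ : Finite M) (φ : ℤ_[p] →+* M),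
    Function.Surjective φ ∧ ∃ T : Set M, L = φ ⁻¹' T

/-- Membership in `𝓛(L)`: the smallest family of subsets of ℤ_p containing `L`, closed under
binary union, binary intersection, and preimages of translations and of multiplications. -/
inductive LatPadic {p : ℕ} [Fact p.Prime] (L : Set ℤ_[p]) : Set ℤ_[p] → Prop
  | base : LatPadic L L
  | union {X Y : Set ℤ_[p]} : LatPadic L X → LatPadic L Y → LatPadic L (X ∪ Y)
  | inter {X Y : Set ℤ_[p]} : LatPadic L X → LatPadic L Y → LatPadic L (X ∩ Y)
  | shift {X : Set ℤ_[p]} (a : ℤ_[p]) : LatPadic L X → LatPadic L {x | x + a ∈ X}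
  | div {X : Set ℤ_[p]} (a : ℤ_[p]) : LatPadic L X → LatPadic L {x | a * x ∈ X}

open PadicInt

lemma dvd_iff_toZModPow {p : ℕ} [Fact p.Prime] (n : ℕ) (z : ℤ_[p]) :
    (p : ℤ_[p]) ^ n ∣ z ↔ PadicInt.toZModPow n z = 0 := by
  rw [← Ideal.mem_span_singleton, ← PadicInt.ker_toZModPow, RingHom.mem_ker]

lemma key_arith {p : ℕ} [Fact p.Prime] {m : ℕ} (hm : 1 ≤ m) {x : ℤ_[p]}
    (hx : ¬ (p : ℤ_[p]) ^ m ∣ x) {d : ℤ_[p]} (hd : (p : ℤ_[p]) ^ (m - 1) ∣ d) :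
    ∃ j : ℕ, (p : ℤ_[p]) ^ m ∣ ((j : ℤ_[p]) * x - d) := by
  have hx0 : x ≠ 0 := by rintro rfl; exact hx (dvd_zero _)
  have hvx : x.valuation < (m : ℤ) := by
    by_contra h
    exact hx (Ideal.mem_span_singleton.mp
      ((PadicInt.mem_span_pow_iff_le_valuation x hx0 m).mpr (by omega)))
  set k := x.valuation with hkdef
  have hkv : (k : ℤ) = x.valuation := rfl
  have hkm : k < m := by omega
  haveI : NeZero (p ^ (m - k)) :=
    ⟨pow_ne_zero _ (Fact.out (p := p.Prime)).ne_zero⟩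
  set u := PadicInt.unitCoeff hx0 with hu
  have hxu : x = (u : ℤ_[p]) * (p : ℤ_[p]) ^ k := PadicInt.unitCoeff_spec hx0
  obtain ⟨t, ht⟩ := hd
  set w : ℤ_[p] := (p : ℤ_[p]) ^ (m - 1 - k) * t * ((u⁻¹ : ℤ_[p]ˣ) : ℤ_[p]) with hw
  refine ⟨(PadicInt.toZModPow (m - k) w).val, ?_⟩
  have hjw : (p : ℤ_[p]) ^ (m - k) ∣
      ((((PadicInt.toZModPow (m - k) w).val : ℕ) : ℤ_[p]) - w) := by
    rw [dvd_iff_toZModPow, map_sub, map_natCast, ZMod.natCast_zmod_val, sub_self]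
  have hwx : w * x = d := by
    rw [hxu, hw, ht]
    have h1 : ((u⁻¹ : ℤ_[p]ˣ) : ℤ_[p]) * (u : ℤ_[p]) = 1 := by
      exact_mod_cast u.inv_mul
    have h2 : (p : ℤ_[p]) ^ (m - 1 - k) * (p : ℤ_[p]) ^ k = (p : ℤ_[p]) ^ (m - 1) := by
      rw [← pow_add, Nat.sub_add_cancel (by omega)]
    calc (p : ℤ_[p]) ^ (m - 1 - k) * t * ((u⁻¹ : ℤ_[p]ˣ) : ℤ_[p]) * ((u : ℤ_[p]) * (p:ℤ_[p]) ^ k)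
        = ((p : ℤ_[p]) ^ (m - 1 - k) * (p:ℤ_[p]) ^ k) * t *
            (((u⁻¹ : ℤ_[p]ˣ) : ℤ_[p]) * (u : ℤ_[p])) := by ring
      _ = (p : ℤ_[p]) ^ (m - 1) * t := by rw [h1, h2, mul_one]
  obtain ⟨c, hc⟩ := hjw
  refine ⟨c * (u : ℤ_[p]), ?_⟩
  have heq : (((PadicInt.toZModPow (m - k) w).val : ℕ) : ℤ_[p]) * x - d
      = ((((PadicInt.toZModPow (m - k) w).val : ℕ) : ℤ_[p]) - w) * x := by
    rw [sub_mul, hwx]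
  rw [heq, hc, hxu]
  have hpow : (p : ℤ_[p]) ^ (m - k) * (p : ℤ_[p]) ^ k = (p : ℤ_[p]) ^ m := by
    rw [← pow_add, Nat.sub_add_cancel (le_of_lt hkm)]
  rw [← hpow]; ring

lemma lat_sat {p : ℕ} [Fact p.Prime] {L : Set ℤ_[p]} {m : ℕ}
    (hL : ∀ x y : ℤ_[p], (p : ℤ_[p]) ^ m ∣ (x - y) → (x ∈ L ↔ y ∈ L))
    {X : Set ℤ_[p]} (hX : LatPadic L X) :
    ∀ x y : ℤ_[p], (p : ℤ_[p]) ^ m ∣ (x - y) → (x ∈ X ↔ y ∈ X) := by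
  induction hX with
  | base => exact hL
  | union h1 h2 ih1 ih2 =>
    intro x y hxy
    simp only [Set.mem_union]
    rw [ih1 x y hxy, ih2 x y hxy]
  | inter h1 h2 ih1 ih2 =>
    intro x y hxy
    simp only [Set.mem_inter_iff]
    rw [ih1 x y hxy, ih2 x y hxy]
  | shift a h ih =>
    intro x y hxy
    simp only [Set.mem_setOf_eq]
    exact ih (x + a) (y + a) (by simpa using hxy)
  | div a h ih =>
    intro x y hxy
    simp only [Set.mem_setOf_eq]
    refine ih (a * x) (a * y) ?_
    have h2 : a * x - a * y = a * (x - y) := by ring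
    rw [h2]
    exact Dvd.dvd.mul_left hxy a

lemma lat_biInter {p : ℕ} [Fact p.Prime] {L : Set ℤ_[p]} {ι : Type*} {s : Finset ι}
    (hs : s.Nonempty) {g : ι → Set ℤ_[p]} :
    (∀ i ∈ s, LatPadic L (g i)) → LatPadic L (⋂ i ∈ s, g i) := by
  classical
  induction hs using Finset.Nonempty.cons_induction with
  | singleton a => intro h; simpa using h a (Finset.mem_singleton_self a)
  | cons a s ha hs ih =>
    intro h
    rw [Finset.cons_eq_insert, Finset.set_biInter_insert]
    exact (h a (by simp)).inter (ih fun i hi => h i (by simp [hi]))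

lemma lat_biUnion {p : ℕ} [Fact p.Prime] {L : Set ℤ_[p]} {ι : Type*} {s : Finset ι}
    (hs : s.Nonempty) {g : ι → Set ℤ_[p]} :
    (∀ i ∈ s, LatPadic L (g i)) → LatPadic L (⋃ i ∈ s, g i) := by
  classical
  induction hs using Finset.Nonempty.cons_induction with
  | singleton a => intro h; simpa using h a (Finset.mem_singleton_self a)
  | cons a s ha hs ih =>
    intro h
    rw [Finset.cons_eq_insert, Finset.set_biUnion_insert]
    exact (h a (by simp)).union (ih fun i hi => h i (by simp [hi]))

lemma lat_iInter {p : ℕ} [Fact p.Prime] {L : Set ℤ_[p]} {ι : Type*} [Fintype ι] [Nonempty ι]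
    (g : ι → Set ℤ_[p]) (h : ∀ i, LatPadic L (g i)) : LatPadic L (⋂ i, g i) := by
  have h2 := lat_biInter (L := L) (s := (Finset.univ : Finset ι)) Finset.univ_nonempty
    (fun i _ => h i)
  simpa using h2

lemma lat_iUnion {p : ℕ} [Fact p.Prime] {L : Set ℤ_[p]} {ι : Type*} [Fintype ι] [Nonempty ι]
    (g : ι → Set ℤ_[p]) (h : ∀ i, LatPadic L (g i)) : LatPadic L (⋃ i, g i) := by
  have h2 := lat_biUnion (L := L) (s := (Finset.univ : Finset ι)) Finset.univ_nonempty
    (fun i _ => h i)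
  simpa using h2

lemma lat_of_empty {p : ℕ} [Fact p.Prime] {X : Set ℤ_[p]}
    (h : LatPadic (∅ : Set ℤ_[p]) X) : X = ∅ := by
  induction h with
  | base => rfl
  | union _ _ ih1 ih2 => rw [ih1, ih2, Set.union_empty]
  | inter _ _ ih1 ih2 => rw [ih1, ih2, Set.inter_empty]
  | shift a _ ih => rw [ih]; ext z; simp
  | div a _ ih => rw [ih]; ext z; simp

lemma lat_of_univ {p : ℕ} [Fact p.Prime] {X : Set ℤ_[p]}
    (h : LatPadic (Set.univ : Set ℤ_[p]) X) : X = Set.univ := by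
  induction h with
  | base => rfl
  | union _ _ ih1 ih2 => rw [ih1, ih2, Set.union_univ]
  | inter _ _ ih1 ih2 => rw [ih1, ih2, Set.inter_univ]
  | shift a _ ih => rw [ih]; ext z; simp
  | div a _ ih => rw [ih]; ext z; simp

lemma lat_P {p : ℕ} [Fact p.Prime] {L : Set ℤ_[p]} {m : ℕ} (hm1 : 1 ≤ m)
    (hsat : ∀ x y : ℤ_[p], (p : ℤ_[p]) ^ m ∣ (x - y) → (x ∈ L ↔ y ∈ L))
    (hnot : ¬ ∀ x y : ℤ_[p], (p : ℤ_[p]) ^ (m - 1) ∣ (x - y) → (x ∈ L ↔ y ∈ L))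
    (hne : L.Nonempty) :
    LatPadic L {z : ℤ_[p] | (p : ℤ_[p]) ^ m ∣ z} := by
  classical
  haveI : NeZero (p ^ m) := ⟨pow_ne_zero m (Fact.out (p := p.Prime)).ne_zero⟩
  obtain ⟨a0, ha0⟩ := hne
  set π := @PadicInt.toZModPow p _ m with hπ
  set c : ZMod (p ^ m) → ℤ_[p] :=
    fun s => if h : ∃ y, y ∈ L ∧ π y = s then h.choose else a0 with hc
  have hcL : ∀ s, c s ∈ L := by
    intro s
    rw [hc]
    dsimp only
    split
    · exact (Exists.choose_spec ‹∃ y, y ∈ L ∧ π y = s›).1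
    · exact ha0
  have hcπ : ∀ y ∈ L, π (c (π y)) = π y := by
    intro y hy
    rw [hc]
    dsimp only
    rw [dif_pos ⟨y, hy, rfl⟩]
    exact (Exists.choose_spec (⟨y, hy, rfl⟩ : ∃ y', y' ∈ L ∧ π y' = π y)).2
  have hkey : {z : ℤ_[p] | (p : ℤ_[p]) ^ m ∣ z} = ⋂ s : ZMod (p ^ m), {z | z + c s ∈ L} := by
    ext z
    simp only [Set.mem_iInter, Set.mem_setOf_eq]
    constructor
    · intro hz s
      exact (hsat (z + c s) (c s) (by simpa using hz)).mpr (hcL s)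
    · intro hz
      by_contra hzm
      have hzL : ∀ y ∈ L, z + y ∈ L := by
        intro y hy
        have h1 : z + c (π y) ∈ L := hz (π y)
        have h2 : (p : ℤ_[p]) ^ m ∣ ((z + y) - (z + c (π y))) := by
          have h3 : (p : ℤ_[p]) ^ m ∣ (y - c (π y)) := by
            rw [dvd_iff_toZModPow, map_sub]
            rw [hπ] at hcπ ⊢
            rw [hcπ y hy, sub_self]
          simpa using h3
        exact (hsat _ _ h2).mpr h1
      have hjz : ∀ j : ℕ, ∀ y ∈ L, (j : ℤ_[p]) * z + y ∈ L := by
        intro j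
        induction j with
        | zero => intro y hy; simpa using hy
        | succ j ih =>
          intro y hy
          have h4 := hzL _ (ih y hy)
          have heq : ((j + 1 : ℕ) : ℤ_[p]) * z + y = z + ((j : ℤ_[p]) * z + y) := by
            push_cast; ring
          rw [heq]; exact h4
      apply hnot
      have haux : ∀ d : ℤ_[p], (p : ℤ_[p]) ^ (m - 1) ∣ d → ∀ y ∈ L, d + y ∈ L := by
        intro d hd y hy
        obtain ⟨j, hj⟩ := key_arith hm1 hzm hd
        have h1 := hjz j y hy
        have h2 : (p : ℤ_[p]) ^ m ∣ ((d + y) - ((j : ℤ_[p]) * z + y)) := by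
          have h5 := dvd_neg.mpr hj
          rw [neg_sub] at h5
          simpa using h5
        exact (hsat _ _ h2).mpr h1
      intro a b hab
      constructor
      · intro haL
        have h6 := haux (b - a) (by rw [← neg_sub]; exact dvd_neg.mpr hab) a haL
        simpa using h6
      · intro hbL
        have h6 := haux (a - b) hab b hbL
        simpa using h6
  rw [hkey]
  exact lat_iInter _ fun s => LatPadic.shift (c s) LatPadic.base

lemma lat_of_sat {p : ℕ} [Fact p.Prime] {L : Set ℤ_[p]} {m : ℕ} (hm1 : 1 ≤ m)
    (hP : LatPadic L {z : ℤ_[p] | (p : ℤ_[p]) ^ m ∣ z}) {Y : Set ℤ_[p]}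
    (hY : ∀ x y : ℤ_[p], (p : ℤ_[p]) ^ m ∣ (x - y) → (x ∈ Y ↔ y ∈ Y)) :
    LatPadic L Y := by
  classical
  haveI : NeZero (p ^ m) := ⟨pow_ne_zero m (Fact.out (p := p.Prime)).ne_zero⟩
  have hcoset : ∀ b : ℤ_[p], LatPadic L {z : ℤ_[p] | (p : ℤ_[p]) ^ m ∣ (z - b)} := by
    intro b
    have hset : {z : ℤ_[p] | (p : ℤ_[p]) ^ m ∣ (z - b)}
        = {x : ℤ_[p] | x + (-b) ∈ {z : ℤ_[p] | (p : ℤ_[p]) ^ m ∣ z}} := by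
      ext z; simp [sub_eq_add_neg]
    rw [hset]
    exact LatPadic.shift (-b) hP
  rcases Set.eq_empty_or_nonempty Y with rfl | hne
  · have hint : ({z : ℤ_[p] | (p : ℤ_[p]) ^ m ∣ z} ∩ {z | (p : ℤ_[p]) ^ m ∣ (z - 1)})
        = (∅ : Set ℤ_[p]) := by
      ext z
      simp only [Set.mem_inter_iff, Set.mem_setOf_eq, Set.mem_empty_iff_false, iff_false]
      rintro ⟨h1, h2⟩
      have h3 : (p : ℤ_[p]) ^ m ∣ 1 := by
        have h4 := dvd_sub h1 h2
        simpa using h4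
      have h5 := isUnit_of_dvd_one h3
      rw [isUnit_pow_iff (by omega : m ≠ 0)] at h5
      exact PadicInt.prime_p.not_unit h5
    rw [← hint]
    exact hP.inter (hcoset 1)
  · obtain ⟨a0, ha0⟩ := hne
    set π := @PadicInt.toZModPow p _ m with hπ
    set c : ZMod (p ^ m) → ℤ_[p] :=
      fun s => if h : ∃ y, y ∈ Y ∧ π y = s then h.choose else a0 with hc
    have hcY : ∀ s, c s ∈ Y := by
      intro s
      rw [hc]
      dsimp only
      split
      · exact (Exists.choose_spec ‹∃ y, y ∈ Y ∧ π y = s›).1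
      · exact ha0
    have hcπ : ∀ y ∈ Y, π (c (π y)) = π y := by
      intro y hy
      rw [hc]
      dsimp only
      rw [dif_pos ⟨y, hy, rfl⟩]
      exact (Exists.choose_spec (⟨y, hy, rfl⟩ : ∃ y', y' ∈ Y ∧ π y' = π y)).2
    have hY2 : Y = ⋃ s : ZMod (p ^ m), {z | (p : ℤ_[p]) ^ m ∣ (z - c s)} := by
      ext z
      simp only [Set.mem_iUnion, Set.mem_setOf_eq]
      constructor
      · intro hzY
        refine ⟨π z, ?_⟩
        rw [dvd_iff_toZModPow, map_sub]
        rw [hπ] at hcπ ⊢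
        rw [hcπ z hzY, sub_self]
      · rintro ⟨s, hs⟩
        exact (hY z (c s) hs).mpr (hcY s)
    rw [hY2]
    exact lat_iUnion _ fun s => hcoset (c s)

theorem stmt19 (p : ℕ) [Fact p.Prime] (f : ℤ_[p] → ℤ_[p]) :
    CongPresPadic f ↔
      ∀ L : Set ℤ_[p], RecognizablePadic L →
        ∀ M : Set ℤ_[p], LatPadic L M → LatPadic L (f ⁻¹' M) := by
  classical
  constructor
  · -- forward direction
    intro hf L hL X hX
    obtain ⟨M, _, _, φ, hφs, T, hLT⟩ := hL
    have hker : ∃ n : ℕ, RingHom.ker φ = Ideal.span {(p : ℤ_[p]) ^ n} := by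
      apply PadicInt.ideal_eq_span_pow_p
      intro hbot
      have hinj : Function.Injective φ := (RingHom.injective_iff_ker_eq_bot φ).mpr hbot
      haveI hfin : Finite ℤ_[p] := Finite.of_injective φ hinj
      exact not_finite ℤ_[p]
    obtain ⟨n₀, hn₀⟩ := hker
    have hsatex : ∃ k : ℕ, ∀ x y : ℤ_[p], (p : ℤ_[p]) ^ k ∣ (x - y) → (x ∈ L ↔ y ∈ L) := by
      refine ⟨n₀, fun a b hab => ?_⟩
      have hφab : φ a = φ b := by
        rw [← sub_eq_zero, ← map_sub]
        have : a - b ∈ RingHom.ker φ := by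
          rw [hn₀, Ideal.mem_span_singleton]; exact hab
        rwa [RingHom.mem_ker] at this
      rw [hLT]
      simp [Set.mem_preimage, hφab]
    by_cases hE : L = ∅
    · subst hE
      rw [lat_of_empty hX, Set.preimage_empty]
      exact LatPadic.base
    by_cases hU : L = Set.univ
    · subst hU
      rw [lat_of_univ hX, Set.preimage_univ]
      exact LatPadic.base
    have hne : L.Nonempty := Set.nonempty_iff_ne_empty.mpr hE
    have hS0 : ¬ ∀ x y : ℤ_[p], (p : ℤ_[p]) ^ 0 ∣ (x - y) → (x ∈ L ↔ y ∈ L) := by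
      intro h
      obtain ⟨a, ha⟩ := hne
      apply hU
      ext z
      simp only [Set.mem_univ, iff_true]
      exact (h z a (by simp)).mpr ha
    set m := Nat.find hsatex with hmdef
    have hm : ∀ x y : ℤ_[p], (p : ℤ_[p]) ^ m ∣ (x - y) → (x ∈ L ↔ y ∈ L) :=
      Nat.find_spec hsatex
    have hm1 : 1 ≤ m := by
      rcases Nat.eq_zero_or_pos m with h0 | h1
      · exact absurd (h0 ▸ hm) hS0
      · exact h1
    have hnot : ¬ ∀ x y : ℤ_[p], (p : ℤ_[p]) ^ (m - 1) ∣ (x - y) → (x ∈ L ↔ y ∈ L) :=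
      Nat.find_min hsatex (by omega)
    have hcong : IsRingCongPadic (fun a b : ℤ_[p] => (p : ℤ_[p]) ^ m ∣ (a - b)) := by
      refine ⟨⟨fun a => by simp, fun {a b} h => ?_, fun {a b c} h1 h2 => ?_⟩, ?_, ?_⟩
      · rw [← neg_sub]; exact dvd_neg.mpr h
      · have h3 := dvd_add h1 h2
        rwa [sub_add_sub_cancel] at h3
      · intro a b a' b' h1 h2
        have heq : a + a' - (b + b') = (a - b) + (a' - b') := by ring
        rw [heq]
        exact dvd_add h1 h2
      · intro a b a' b' h1 h2
        have heq : a * a' - b * b' = (a - b) * a' + b * (a' - b') := by ring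
        rw [heq]
        exact dvd_add (h1.mul_right a') (h2.mul_left b)
    have hsatX : ∀ x y : ℤ_[p], (p : ℤ_[p]) ^ m ∣ (x - y) → (x ∈ X ↔ y ∈ X) :=
      lat_sat hm hX
    have hsatf : ∀ x y : ℤ_[p], (p : ℤ_[p]) ^ m ∣ (x - y) → (x ∈ f ⁻¹' X ↔ y ∈ f ⁻¹' X) := by
      intro a b hab
      have hfd : (p : ℤ_[p]) ^ m ∣ (f a - f b) := hf _ hcong a b hab
      exact hsatX (f a) (f b) hfd
    exact lat_of_sat hm1 (lat_P hm1 hm hnot hne) hsatf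
  · -- backward direction
    intro H r hr x y hxy
    have hsub : ∀ a b : ℤ_[p], r a b → r (a - b) 0 := by
      intro a b hab
      have h1 := hr.2.1 a b (-b) (-b) hab (hr.1.refl (-b))
      simpa [sub_eq_add_neg] using h1
    have hsub' : ∀ a b : ℤ_[p], r (a - b) 0 → r a b := by
      intro a b hab
      have h1 := hr.2.1 (a - b) 0 b b hab (hr.1.refl b)
      simpa using h1
    let I : Ideal ℤ_[p] :=
      { carrier := {z | r z 0}
        add_mem' := fun {a b} ha hb => by
          have h1 := hr.2.1 a 0 b 0 ha hb
          simpa using h1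
        zero_mem' := hr.1.refl 0
        smul_mem' := fun c z hz => by
          have h1 := hr.2.2 c c z 0 (hr.1.refl c) hz
          simpa using h1 }
    by_cases hbot : I = ⊥
    · have hmem : x - y ∈ I := hsub x y hxy
      rw [hbot, Ideal.mem_bot, sub_eq_zero] at hmem
      rw [hmem]
      exact hr.1.refl (f y)
    · obtain ⟨n, hn⟩ := PadicInt.ideal_eq_span_pow_p hbot
      haveI : NeZero (p ^ n) := ⟨pow_ne_zero n (Fact.out (p := p.Prime)).ne_zero⟩
      set π := @PadicInt.toZModPow p _ n with hπ
      set L : Set ℤ_[p] := π ⁻¹' {π (f x)} with hLdef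
      have hrec : RecognizablePadic L := by
        refine ⟨ZMod (p ^ n), inferInstance, inferInstance, π, ?_, {π (f x)}, rfl⟩
        intro s
        exact ⟨(s.val : ℤ_[p]), by rw [hπ, map_natCast, ZMod.natCast_zmod_val]⟩
      have hfL := H L hrec L LatPadic.base
      have hsatL : ∀ a b : ℤ_[p], (p : ℤ_[p]) ^ n ∣ (a - b) → (a ∈ L ↔ b ∈ L) := by
        intro a b hab
        have hπab : π a = π b := by
          have h1 := (dvd_iff_toZModPow n (a - b)).mp hab
          rw [← hπ] at h1
          rwa [map_sub, sub_eq_zero] at h1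
        rw [hLdef]
        simp [Set.mem_preimage, hπab]
      have hsatf := lat_sat hsatL hfL
      have hxy' : (p : ℤ_[p]) ^ n ∣ (x - y) := by
        have hmem : x - y ∈ I := hsub x y hxy
        rwa [hn, Ideal.mem_span_singleton] at hmem
      have hxL : x ∈ f ⁻¹' L := by
        rw [hLdef]; simp [Set.mem_preimage]
      have hyL : y ∈ f ⁻¹' L := (hsatf x y hxy').mp hxL
      have hπfy : π (f y) = π (f x) := by
        rw [hLdef] at hyL
        simpa using hyL
      have hdvd : (p : ℤ_[p]) ^ n ∣ (f x - f y) := by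
        rw [dvd_iff_toZModPow, ← hπ, map_sub, hπfy, sub_self]
      apply hsub'
      have hmem : f x - f y ∈ I := by
        rw [hn, Ideal.mem_span_singleton]; exact hdvd
      exact hmem
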